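/- Let m, N ≥ 1 and let ρ be a continuous map from real m×m matrices to complex N×N matrices satisfying ρ(AB) = ρ(A)·ρ(B) for all A, B and ρ(1_m) = 1_N. Let s ∈ ℂ and assume that Y ↦ ρ(Y)·det(Y)^s·e^{−tr(Y)} is integrable over the cone {Y > 0} with respect to dY_inv, and set Γ(ρ⊗det^s) = ∫_{Y>0} ρ(Y) det(Y)^s e^{−tr Y} dY_inv ∈ Mat_N(ℂ). Then for every k in the special orthogonal group SO(m) (real m×m matrices with kᵀk = 1 and det k = 1) one has Γ(ρ⊗det^s) = ρ(kᵀ) · Γ(ρ⊗det^s) · ρ(k). -/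

import Mathlib

open MeasureTheory Matrix

/-- Index set for the entries `Y_{ij}`, `i ≤ j`, of a symmetric `m × m` matrix. -/
abbrev SymIdx (m : ℕ) : Type := {p : Fin m × Fin m // p.1 ≤ p.2}

/-- The symmetric matrix with prescribed upper-triangular entries. -/
def symOf {m : ℕ} (y : SymIdx m → ℝ) : Matrix (Fin m) (Fin m) ℝ :=
  Matrix.of fun i j =>
    if h : i ≤ j then y ⟨(i, j), h⟩ else y ⟨(j, i), le_of_not_ge h⟩

/-- The matrix-valued (entrywise) Gamma integral
`Γ(ρ ⊗ det^s) = ∫_{Y>0} ρ(Y) det(Y)^s e^{-tr Y} dY_inv`. -/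
noncomputable def GammaOp (m N : ℕ)
    (ρ : Matrix (Fin m) (Fin m) ℝ → Matrix (Fin N) (Fin N) ℂ) (s : ℂ) :
    Matrix (Fin N) (Fin N) ℂ :=
  Matrix.of fun i j =>
    ∫ y in {y : SymIdx m → ℝ | (symOf y).PosDef},
      ρ (symOf y) i j *
        (((symOf y).det : ℂ) ^ (s - ((m : ℂ) + 1) / 2) *
          Complex.exp (-((symOf y).trace : ℂ)))

namespace SymAux

variable {m : ℕ}

/-- Reading off the upper-triangular coordinates of a matrix. -/
def coordsOf (A : Matrix (Fin m) (Fin m) ℝ) : SymIdx m → ℝ := fun p => A p.1.1 p.1.2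

lemma symOf_symm (y : SymIdx m → ℝ) (i j : Fin m) : symOf y j i = symOf y i j := by
  simp only [symOf, Matrix.of_apply]
  rcases le_total i j with h | h
  · rcases eq_or_lt_of_le h with rfl | hlt
    · simp
    · rw [dif_neg (not_le.mpr hlt), dif_pos h]
  · rcases eq_or_lt_of_le h with rfl | hlt
    · simp
    · rw [dif_pos h, dif_neg (not_le.mpr hlt)]

lemma symOf_transpose (y : SymIdx m → ℝ) : (symOf y)ᵀ = symOf y := by
  ext i j; exact symOf_symm y i j

lemma symOf_add (y z : SymIdx m → ℝ) : symOf (y + z) = symOf y + symOf z := by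
  ext i j
  simp only [symOf, Matrix.of_apply, Matrix.add_apply, Pi.add_apply]
  split_ifs <;> simp

lemma symOf_smul (c : ℝ) (y : SymIdx m → ℝ) : symOf (c • y) = c • symOf y := by
  ext i j
  simp only [symOf, Matrix.of_apply, Matrix.smul_apply, Pi.smul_apply]
  split_ifs <;> simp

lemma symOf_coordsOf {A : Matrix (Fin m) (Fin m) ℝ} (hA : Aᵀ = A) :
    symOf (coordsOf A) = A := by
  ext i j
  simp only [symOf, coordsOf, Matrix.of_apply]
  split_ifs with h
  · rfl
  · exact congrFun (congrFun hA i) j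

lemma coordsOf_symOf (y : SymIdx m → ℝ) : coordsOf (symOf y) = y := by
  funext p
  simp only [coordsOf, symOf, Matrix.of_apply, dif_pos p.2]

/-- The linear map on coordinates corresponding to `Y ↦ kᵀ Y k`. -/
def conjMap (k : Matrix (Fin m) (Fin m) ℝ) : (SymIdx m → ℝ) →ₗ[ℝ] (SymIdx m → ℝ) where
  toFun y := coordsOf (kᵀ * symOf y * k)
  map_add' y z := by
    funext p
    simp only [coordsOf, symOf_add, Matrix.mul_add, Matrix.add_mul, Matrix.add_apply,
      Pi.add_apply]
  map_smul' c y := by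
    funext p
    simp only [coordsOf, symOf_smul, Matrix.mul_smul, Matrix.smul_mul, Matrix.smul_apply,
      Pi.smul_apply, RingHom.id_apply]

lemma conjMap_def (k : Matrix (Fin m) (Fin m) ℝ) (y : SymIdx m → ℝ) :
    conjMap k y = coordsOf (kᵀ * symOf y * k) := rfl

lemma symOf_conjMap (k : Matrix (Fin m) (Fin m) ℝ) (y : SymIdx m → ℝ) :
    symOf (conjMap k y) = kᵀ * symOf y * k := by
  have hs : (kᵀ * symOf y * k)ᵀ = kᵀ * symOf y * k := by
    rw [Matrix.transpose_mul, Matrix.transpose_mul, Matrix.transpose_transpose,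
      symOf_transpose, Matrix.mul_assoc]
  exact symOf_coordsOf hs

/-- Sorting map from pairs of indices to the upper-triangular index set. -/
def srt (q : Fin m × Fin m) : SymIdx m :=
  if h : q.1 ≤ q.2 then ⟨q, h⟩ else ⟨(q.2, q.1), le_of_not_ge h⟩

lemma symOf_apply (y : SymIdx m → ℝ) (i j : Fin m) : symOf y i j = y (srt (i, j)) := by
  simp only [symOf, srt, Matrix.of_apply]
  split_ifs <;> rfl

/-- The weight of an index: `1` on the diagonal, `2` off it. -/
def wgt (p : SymIdx m) : ℝ := if p.1.1 = p.1.2 then 1 else 2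

lemma fiber_srt (p : SymIdx m) :
    Finset.univ.filter (fun q => srt q = p) =
      (if p.1.1 = p.1.2 then {(p.1.1, p.1.2)} else {(p.1.1, p.1.2), (p.1.2, p.1.1)}) := by
  obtain ⟨⟨a, b⟩, hab⟩ := p
  simp only at hab
  ext ⟨i, j⟩
  rw [Finset.mem_filter]
  simp only [Finset.mem_univ, true_and, srt]
  split_ifs with hij hd hd <;>
    simp only [Subtype.mk.injEq, Prod.mk.injEq, Finset.mem_insert, Finset.mem_singleton,
      Fin.le_def, Fin.ext_iff] at * <;> omega

lemma trace_symOf_mul (y z : SymIdx m → ℝ) :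
    (symOf y * symOf z).trace = ∑ p : SymIdx m, wgt p * (y p * z p) := by
  have key : ∀ i j : Fin m, symOf y i j * symOf z j i =
      (fun p => y p * z p) (srt (i, j)) := by
    intro i j
    rw [symOf_apply, symOf_symm, symOf_apply]
  rw [Matrix.trace]
  simp only [Matrix.diag, Matrix.mul_apply]
  rw [← Finset.sum_product']
  calc (∑ q ∈ Finset.univ ×ˢ Finset.univ, symOf y q.1 q.2 * symOf z q.2 q.1)
      = ∑ q ∈ (Finset.univ : Finset (Fin m × Fin m)), (fun p => y p * z p) (srt q) := by
        rw [← Finset.univ_product_univ]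
        exact Finset.sum_congr rfl (fun q _ => key q.1 q.2)
    _ = ∑ p : SymIdx m, ∑ q ∈ Finset.univ.filter (fun q => srt q = p),
          (fun p => y p * z p) (srt q) :=
        (Finset.sum_fiberwise_of_maps_to (fun q _ => Finset.mem_univ _) _).symm
    _ = ∑ p : SymIdx m, wgt p * (y p * z p) := by
        refine Finset.sum_congr rfl (fun p _ => ?_)
        rw [Finset.sum_congr rfl (fun q hq => by
          rw [(Finset.mem_filter.mp hq).2]), Finset.sum_const, fiber_srt]
        obtain ⟨⟨a, b⟩, hab⟩ := p
        beta_reduce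
        by_cases hd : a = b
        · rw [if_pos hd, Finset.card_singleton, one_smul]
          have hw : wgt (⟨(a, b), hab⟩ : SymIdx m) = 1 := if_pos hd
          rw [hw, one_mul]
        · have hne : ((a, b) : Fin m × Fin m) ≠ (b, a) := fun h => hd (congrArg Prod.fst h)
          rw [if_neg hd, Finset.card_insert_of_notMem (by simp [hne]),
            Finset.card_singleton]
          have hw : wgt (⟨(a, b), hab⟩ : SymIdx m) = 2 := if_neg hd
          rw [hw]
          show (2 : ℕ) • _ = _
          rw [nsmul_eq_mul]
          push_cast
          ring

lemma posDef_conj {A K : Matrix (Fin m) (Fin m) ℝ} (hA : A.PosDef) (hK : Kᵀ * K = 1) :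
    (Kᵀ * A * K).PosDef := by
  have h := hA.conjTranspose_mul_mul_same (B := K) (fun x y hxy => by
    simpa [Matrix.mulVec_mulVec, hK] using congrArg (Kᵀ *ᵥ ·) hxy)
  simpa [Matrix.conjTranspose_eq_transpose_of_trivial] using h

lemma trace_conj {A K : Matrix (Fin m) (Fin m) ℝ} (hK' : K * Kᵀ = 1) :
    (Kᵀ * A * K).trace = A.trace := by
  rw [Matrix.trace_mul_cycle, hK', Matrix.one_mul]

lemma det_conj {A K : Matrix (Fin m) (Fin m) ℝ} (hdet : K.det = 1) :
    (Kᵀ * A * K).det = A.det := by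
  rw [Matrix.det_mul, Matrix.det_mul, Matrix.det_transpose, hdet, one_mul, mul_one]

lemma conj_conj {A K : Matrix (Fin m) (Fin m) ℝ} (hK : Kᵀ * K = 1) :
    K * (Kᵀ * A * K) * Kᵀ = A := by
  have hK' : K * Kᵀ = 1 := mul_eq_one_comm.mp hK
  have h : K * (Kᵀ * A * K) * Kᵀ = (K * Kᵀ) * A * (K * Kᵀ) := by noncomm_ring
  rw [h, hK', Matrix.one_mul, Matrix.mul_one]

lemma abs_det_conjMap (k : Matrix (Fin m) (Fin m) ℝ) (hk : kᵀ * k = 1) :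
    |LinearMap.det (conjMap k)| = 1 := by
  classical
  have hk' : k * kᵀ = 1 := mul_eq_one_comm.mp hk
  set M := LinearMap.toMatrix' (conjMap k) with hM
  have key : Mᵀ * Matrix.diagonal wgt * M = Matrix.diagonal (wgt (m := m)) := by
    ext p q
    set ep : SymIdx m → ℝ := fun r' => if r' = p then (1:ℝ) else 0 with hep
    set eq' : SymIdx m → ℝ := fun r' => if r' = q then (1:ℝ) else 0 with heq
    have step1 : ((Mᵀ * Matrix.diagonal wgt * M : Matrix (SymIdx m) (SymIdx m) ℝ)) p q
        = ∑ r : SymIdx m, wgt r * (conjMap k ep r * conjMap k eq' r) := by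
      rw [Matrix.mul_apply]
      refine Finset.sum_congr rfl fun r _ => ?_
      rw [Matrix.mul_diagonal, Matrix.transpose_apply, hM,
        LinearMap.toMatrix'_apply, LinearMap.toMatrix'_apply]
      rw [show (Pi.single p (1:ℝ) : SymIdx m → ℝ) = ep from funext fun r' => by
          simp [hep, Pi.single_apply],
        show (Pi.single q (1:ℝ) : SymIdx m → ℝ) = eq' from funext fun r' => by
          simp [heq, Pi.single_apply]]
      ring
    rw [step1, ← trace_symOf_mul, symOf_conjMap, symOf_conjMap]
    have step2 : (kᵀ * symOf ep * k) * (kᵀ * symOf eq' * k)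
        = kᵀ * (symOf ep * symOf eq') * k := by
      calc (kᵀ * symOf ep * k) * (kᵀ * symOf eq' * k)
          = kᵀ * (symOf ep * (k * kᵀ) * symOf eq') * k := by noncomm_ring
        _ = kᵀ * (symOf ep * symOf eq') * k := by rw [hk', Matrix.mul_one]
    rw [step2, trace_conj hk', trace_symOf_mul]
    by_cases hpq : p = q
    · subst hpq
      rw [Matrix.diagonal_apply_eq]
      rw [Finset.sum_eq_single p (fun r _ hr => by simp [hep, hr]) (by simp)]
      simp [hep, heq]
    · rw [Matrix.diagonal_apply_ne _ hpq]
      refine Finset.sum_eq_zero fun r _ => ?_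
      rcases eq_or_ne r p with rfl | h1
      · simp [heq, hpq]
      · simp [hep, h1]
  have hdW : (Matrix.diagonal (wgt (m := m))).det ≠ 0 := by
    rw [Matrix.det_diagonal]
    refine Finset.prod_ne_zero_iff.mpr fun p _ => ?_
    rw [wgt]; split_ifs <;> norm_num
  have hdet : M.det * M.det = 1 := by
    have h := congrArg Matrix.det key
    rw [Matrix.det_mul, Matrix.det_mul, Matrix.det_transpose] at h
    have h2 : (M.det * M.det) * (Matrix.diagonal (wgt (m := m))).det
        = 1 * (Matrix.diagonal (wgt (m := m))).det := by
      linear_combination h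
    exact mul_right_cancel₀ hdW h2
  rw [← LinearMap.det_toMatrix' (conjMap k)]
  rcases mul_self_eq_one_iff.mp hdet with h | h <;> rw [← hM, h] <;> norm_num

lemma conjMap_measurable (k : Matrix (Fin m) (Fin m) ℝ) :
    Measurable (conjMap k) :=
  (LinearMap.continuous_on_pi (conjMap k)).measurable

lemma conjMap_measurePreserving (k : Matrix (Fin m) (Fin m) ℝ) (hk : kᵀ * k = 1) :
    MeasurePreserving (conjMap k) volume volume := by
  have habs := abs_det_conjMap k hk
  have hd : LinearMap.det (conjMap k) ≠ 0 := by
    intro h0; rw [h0] at habs; norm_num at habs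
  refine ⟨conjMap_measurable k, ?_⟩
  rw [Real.map_linearMap_volume_pi_eq_smul_volume_pi hd, abs_inv, habs]
  norm_num

lemma conjMap_conjMap (k : Matrix (Fin m) (Fin m) ℝ) (hk : kᵀ * k = 1) (y : SymIdx m → ℝ) :
    conjMap kᵀ (conjMap k y) = y := by
  rw [conjMap_def, symOf_conjMap, Matrix.transpose_transpose, conj_conj hk, coordsOf_symOf]

/-- `conjMap k` as a measurable equivalence. -/
noncomputable def conjEquiv (k : Matrix (Fin m) (Fin m) ℝ) (hk : kᵀ * k = 1) :
    (SymIdx m → ℝ) ≃ᵐ (SymIdx m → ℝ) where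
  toFun := conjMap k
  invFun := conjMap kᵀ
  left_inv := conjMap_conjMap k hk
  right_inv := fun y => by
    have hk2 : kᵀᵀ * kᵀ = 1 := by
      rw [Matrix.transpose_transpose]; exact mul_eq_one_comm.mp hk
    have h := conjMap_conjMap kᵀ hk2 y
    rwa [Matrix.transpose_transpose] at h
  measurable_toFun := conjMap_measurable k
  measurable_invFun := conjMap_measurable kᵀ

lemma conjMap_preimage (k : Matrix (Fin m) (Fin m) ℝ) (hk : kᵀ * k = 1) :
    conjMap k ⁻¹' {y : SymIdx m → ℝ | (symOf y).PosDef}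
      = {y : SymIdx m → ℝ | (symOf y).PosDef} := by
  ext y
  simp only [Set.mem_preimage, Set.mem_setOf_eq, symOf_conjMap]
  constructor
  · intro h
    have hk2 : kᵀᵀ * kᵀ = 1 := by
      rw [Matrix.transpose_transpose]; exact mul_eq_one_comm.mp hk
    have h2 := posDef_conj h hk2
    rwa [Matrix.transpose_transpose, conj_conj hk] at h2
  · intro h
    exact posDef_conj h hk

end SymAux

open SymAux in
/-- The Gamma integral `Γ(ρ ⊗ det^s)` is invariant under orthogonal transformations:
`Γ(ρ ⊗ det^s) = ρ(kᵀ) Γ(ρ ⊗ det^s) ρ(k)` for all `k ∈ SO(m)`. -/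
theorem gammaOp_so_invariant (m N : ℕ) (hm : 1 ≤ m) (hN : 1 ≤ N)
    (ρ : Matrix (Fin m) (Fin m) ℝ → Matrix (Fin N) (Fin N) ℂ)
    (hcont : Continuous ρ)
    (hmul : ∀ A B : Matrix (Fin m) (Fin m) ℝ, ρ (A * B) = ρ A * ρ B)
    (hone : ρ 1 = 1) (s : ℂ)
    (hint : ∀ i j : Fin N,
      IntegrableOn
        (fun y : SymIdx m → ℝ =>
          ρ (symOf y) i j *
            (((symOf y).det : ℂ) ^ (s - ((m : ℂ) + 1) / 2) *
              Complex.exp (-((symOf y).trace : ℂ))))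
        {y : SymIdx m → ℝ | (symOf y).PosDef})
    (k : Matrix (Fin m) (Fin m) ℝ) (hk : kᵀ * k = 1) (hdet : k.det = 1) :
    GammaOp m N ρ s = ρ kᵀ * GammaOp m N ρ s * ρ k := by
  classical
  have hk' : k * kᵀ = 1 := mul_eq_one_comm.mp hk
  set S : Set (SymIdx m → ℝ) := {y | (symOf y).PosDef} with hS
  set G : (SymIdx m → ℝ) → ℂ := fun y =>
    ((symOf y).det : ℂ) ^ (s - ((m : ℂ) + 1) / 2) *
      Complex.exp (-((symOf y).trace : ℂ)) with hG
  -- change of variables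
  have hemb : MeasurableEmbedding (conjMap (m := m) k) :=
    (conjEquiv k hk).measurableEmbedding
  have hcov : ∀ F : (SymIdx m → ℝ) → ℂ,
      (∫ y in S, F (conjMap k y)) = ∫ y in S, F y := by
    intro F
    have hpre : conjMap (m := m) k ⁻¹' S = S := conjMap_preimage k hk
    conv_lhs => rw [← hpre]
    exact (conjMap_measurePreserving k hk).setIntegral_preimage_emb hemb F S
  have hρconj : ∀ y : SymIdx m → ℝ,
      ρ (symOf (conjMap k y)) = ρ kᵀ * ρ (symOf y) * ρ k := by
    intro y
    rw [symOf_conjMap, hmul, hmul]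
  have hGconj : ∀ y : SymIdx m → ℝ, G (conjMap k y) = G y := by
    intro y
    rw [hG]
    simp only [symOf_conjMap, det_conj hdet, trace_conj hk']
  have hGamma : ∀ a b : Fin N,
      GammaOp m N ρ s a b = ∫ y in S, ρ (symOf y) a b * G y := fun a b => rfl
  have hInt : ∀ a b : Fin N,
      Integrable (fun y => ρ (symOf y) a b * G y) (volume.restrict S) := fun a b => hint a b
  ext i j
  have lhs_eq : GammaOp m N ρ s i j
      = ∫ y in S, (ρ kᵀ * ρ (symOf y) * ρ k) i j * G y := by
    rw [hGamma i j, ← hcov (fun y => ρ (symOf y) i j * G y)]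
    refine integral_congr_ae (Filter.Eventually.of_forall fun y => ?_)
    show ρ (symOf (conjMap k y)) i j * G (conjMap k y) = _
    rw [hρconj y, hGconj y]
  have hterm : ∀ a b : Fin N, Integrable
      (fun y => ρ kᵀ i a * (ρ (symOf y) a b * G y) * ρ k b j) (volume.restrict S) := by
    intro a b
    have heq : (fun y => ρ kᵀ i a * (ρ (symOf y) a b * G y) * ρ k b j)
        = fun y => (ρ kᵀ i a * ρ k b j) * (ρ (symOf y) a b * G y) := by
      funext y; ring
    rw [heq]
    exact (hInt a b).const_mul _
  have rhs_eq : (ρ kᵀ * GammaOp m N ρ s * ρ k) i j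
      = ∫ y in S, (ρ kᵀ * ρ (symOf y) * ρ k) i j * G y := by
    calc (ρ kᵀ * GammaOp m N ρ s * ρ k) i j
        = ∑ b : Fin N, ∑ a : Fin N,
            ρ kᵀ i a * (∫ y in S, ρ (symOf y) a b * G y) * ρ k b j := by
          rw [Matrix.mul_apply]
          refine Finset.sum_congr rfl fun b _ => ?_
          rw [Matrix.mul_apply, Finset.sum_mul]
          exact Finset.sum_congr rfl fun a _ => by rw [hGamma a b]
      _ = ∑ b : Fin N, ∑ a : Fin N,
            ∫ y in S, ρ kᵀ i a * (ρ (symOf y) a b * G y) * ρ k b j := by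
          refine Finset.sum_congr rfl fun b _ => Finset.sum_congr rfl fun a _ => ?_
          rw [← integral_const_mul, ← integral_mul_const]
      _ = ∫ y in S, ∑ b : Fin N, ∑ a : Fin N,
            ρ kᵀ i a * (ρ (symOf y) a b * G y) * ρ k b j := by
          rw [integral_finset_sum _
            (fun b _ => integrable_finset_sum _ (fun a _ => hterm a b))]
          refine Finset.sum_congr rfl fun b _ => ?_
          rw [integral_finset_sum _ (fun a _ => hterm a b)]
      _ = ∫ y in S, (ρ kᵀ * ρ (symOf y) * ρ k) i j * G y := by
          refine integral_congr_ae (Filter.Eventually.of_forall fun y => ?_)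
          beta_reduce
          rw [Matrix.mul_apply, Finset.sum_mul]
          refine Finset.sum_congr rfl fun b _ => ?_
          rw [Matrix.mul_apply, Finset.sum_mul, Finset.sum_mul]
          refine Finset.sum_congr rfl fun a _ => ?_
          ring
  rw [lhs_eq, rhs_eq]
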